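/- Let u : Ω → ℝ be a weakly differentiable function on a bounded open set Ω ⊂ ℝ^N such that u ∈ M^r(Ω) for some r > 0, and suppose there exist constants C > 0, ρ > 0, and p > 1 such that ∫_Ω |∇T_k(u)|^p dx ≤ C k^ρ for every k > 0, where T_k(s) = max(−k, min(k, s)). Then |∇u| ∈ M^{pr/(ρ+r)}(Ω), i.e. there is a constant C' with meas{|∇u| > λ} ≤ C'/λ^{pr/(ρ+r)} for all λ > 0. -/

import Mathlib

open MeasureTheory Real

/-- Marcinkiewicz regularity lemma: let `u : Ω → ℝ` with (weak) gradient `g`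
on a bounded open `Ω ⊂ ℝ^N`, `u ∈ M^r(Ω)` for some `r > 0`, and suppose
`∫_Ω |∇T_k(u)|^p ≤ C k^ρ` for every `k > 0` (here `∇T_k(u) = ∇u · χ_{{|u| ≤ k}}`).
Then `|∇u| ∈ M^{pr/(ρ+r)}(Ω)`. -/
theorem stmt_2 {N : ℕ} (Ω : Set (EuclideanSpace ℝ (Fin N))) (hΩopen : IsOpen Ω)
    (hΩbd : Bornology.IsBounded Ω)
    (u : EuclideanSpace ℝ (Fin N) → ℝ) (g : EuclideanSpace ℝ (Fin N) → EuclideanSpace ℝ (Fin N))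
    (hu : Measurable u) (hg : Measurable g)
    (r : ℝ) (hr : 0 < r) (Cr : ℝ) (hCr : 0 < Cr)
    (hM : ∀ k > (0 : ℝ), volume {x ∈ Ω | k ≤ |u x|} ≤ ENNReal.ofReal (Cr / k ^ r))
    (C ρ p : ℝ) (hC : 0 < C) (hρ : 0 < ρ) (hp : 1 < p)
    (hgrad : ∀ k > (0 : ℝ),
      ∫⁻ x in Ω, ENNReal.ofReal (Set.indicator {y | |u y| ≤ k} (fun y => ‖g y‖ ^ p) x)
        ≤ ENNReal.ofReal (C * k ^ ρ)) :
    ∃ C' > (0 : ℝ), ∀ l > (0 : ℝ),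
      volume {x ∈ Ω | l < ‖g x‖} ≤ ENNReal.ofReal (C' / l ^ (p * r / (ρ + r))) := by
  refine ⟨Cr + C, by positivity, fun l hl => ?_⟩
  have hρr : 0 < ρ + r := by linarith
  have hp0 : 0 < p := by linarith
  set s : ℝ := p * r / (ρ + r) with hs
  set k : ℝ := l ^ (p / (ρ + r)) with hk
  have hk0 : 0 < k := Real.rpow_pos_of_pos hl _
  have hls : 0 < l ^ s := Real.rpow_pos_of_pos hl _
  have hlp : 0 < l ^ p := Real.rpow_pos_of_pos hl _
  have hkr : k ^ r = l ^ s := by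
    rw [hk, ← Real.rpow_mul hl.le]
    congr 1
    rw [hs]; ring
  have hkρ : C * k ^ ρ / l ^ p = C / l ^ s := by
    rw [hk, ← Real.rpow_mul hl.le, mul_div_assoc, ← Real.rpow_sub hl]
    have : p / (ρ + r) * ρ - p = -s := by rw [hs]; field_simp; ring
    rw [this, Real.rpow_neg hl.le, div_eq_mul_inv]
  -- set decomposition
  set A : Set (EuclideanSpace ℝ (Fin N)) := {x ∈ Ω | k ≤ |u x|} with hA
  set B : Set (EuclideanSpace ℝ (Fin N)) := {x ∈ Ω | |u x| ≤ k ∧ l < ‖g x‖} with hB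
  have hsub : {x ∈ Ω | l < ‖g x‖} ⊆ A ∪ B := by
    intro x hx
    rcases le_total (|u x|) k with h | h
    · exact Or.inr ⟨hx.1, h, hx.2⟩
    · exact Or.inl ⟨hx.1, h⟩
  have hBmeas : MeasurableSet B := by
    have : B = Ω ∩ ({x | |u x| ≤ k} ∩ {x | l < ‖g x‖}) := by
      ext x
      simp only [hB, Set.mem_setOf_eq, Set.mem_inter_iff]
    rw [this]
    exact hΩopen.measurableSet.inter
      ((hu.abs measurableSet_Iic).inter
        (hg.norm measurableSet_Ioi))
  -- Chebyshev bound on B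
  have hBsubΩ : B ⊆ Ω := fun x hx => hx.1
  have hcheb : ENNReal.ofReal (l ^ p) * volume B ≤ ENNReal.ofReal (C * k ^ ρ) := by
    have h1 : ENNReal.ofReal (l ^ p) * volume B
        = ∫⁻ _ in B, ENNReal.ofReal (l ^ p) := by
      rw [setLIntegral_const]
    rw [h1]
    refine le_trans ?_ (le_trans (lintegral_mono_set hBsubΩ) (hgrad k hk0))
    refine setLIntegral_mono_ae ?_ ?_
    · refine Measurable.aemeasurable ?_
      refine ENNReal.measurable_ofReal.comp ?_
      refine Measurable.indicator ?_ ?_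
      · exact (hg.norm).pow_const p
      · exact hu.abs measurableSet_Iic
    · refine Filter.Eventually.of_forall fun x hx => ?_
      have hxu : |u x| ≤ k := hx.2.1
      have hxg : l < ‖g x‖ := hx.2.2
      rw [Set.indicator_of_mem (by exact hxu : x ∈ {y | |u y| ≤ k})]
      exact ENNReal.ofReal_le_ofReal
        (Real.rpow_le_rpow hl.le hxg.le hp0.le)
  have hBvol : volume B ≤ ENNReal.ofReal (C * k ^ ρ / l ^ p) := by
    rw [ENNReal.ofReal_div_of_pos hlp]
    rw [ENNReal.le_div_iff_mul_le (Or.inl (by simp [ENNReal.ofReal_eq_zero]; linarith))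
      (Or.inl ENNReal.ofReal_ne_top)]
    rw [mul_comm]
    exact hcheb
  calc volume {x ∈ Ω | l < ‖g x‖} ≤ volume (A ∪ B) := measure_mono hsub
    _ ≤ volume A + volume B := measure_union_le _ _
    _ ≤ ENNReal.ofReal (Cr / k ^ r) + ENNReal.ofReal (C * k ^ ρ / l ^ p) :=
        add_le_add (hM k hk0) hBvol
    _ = ENNReal.ofReal (Cr / k ^ r + C * k ^ ρ / l ^ p) := by
        rw [ENNReal.ofReal_add (by positivity) (by positivity)]
    _ = ENNReal.ofReal ((Cr + C) / l ^ s) := by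
        rw [hkr, hkρ, ← add_div]
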